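/- arXiv:0911.2638 — 3 statements merged into one kernel-verified Lean document; each statement's English description precedes it below -/
import Mathlib

section
/- Let p, q ≥ 1 be integers, K ∈ 𝕂^{p,q}, and let f : ℝ × ℝ → ℝ be smooth and bounded together with its derivatives, with f(t,s) 1-periodic in the second variable s; set f^ε(t) = f(t, t/ε) and f̄(t) = ∫₀¹ f(t,s) ds. Then there exist constants C₁ and C₂, independent of ε and η, such that for all 0 < ε ≤ η ≤ 1 and all t ∈ ℝ, |(K_η ∗ f^ε)(t) − f̄(t)| ≤ C₁ η^p + C₂ (ε/η)^q, where (K_η ∗ f^ε)(t) = ∫ K_η(t − u) f^ε(u) du. -/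
open MeasureTheory

lemma aux_support_deriv (L : ℝ → ℝ) (h : Function.support L ⊆ Set.Icc (-1:ℝ) 1) :
    Function.support (deriv L) ⊆ Set.Icc (-1:ℝ) 1 := by
  intro x hx
  by_contra hxI
  apply hx
  have hev : L =ᶠ[nhds x] (fun _ => (0:ℝ)) := by
    filter_upwards [isClosed_Icc.isOpen_compl.mem_nhds hxI] with y hy
    by_contra h0
    exact hy (h (Function.mem_support.mpr h0))
  show deriv L x = 0
  rw [hev.deriv_eq]
  exact deriv_const x 0

lemma aux_cv (ψ : ℝ → ℝ) (t η : ℝ) (hη : 0 < η) :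
    (∫ u : ℝ, ψ ((t - u)/η)) = η * ∫ v : ℝ, ψ v := by
  have h1 : (∫ u : ℝ, ψ ((t - u)/η)) = ∫ u : ℝ, (fun w : ℝ => ψ (-w / η)) (u - t) := by
    congr 1; funext u; congr 1; ring
  rw [h1, integral_sub_right_eq_self (fun w : ℝ => ψ (-w / η)) t]
  have h2 : (∫ w : ℝ, ψ (-w / η)) = ∫ w : ℝ, (fun v : ℝ => ψ (v / η)) (-w) := by
    congr 1
  rw [h2, integral_neg_eq_self (fun v : ℝ => ψ (v / η)) volume,
    Measure.integral_comp_div (fun v : ℝ => ψ v) η, abs_of_pos hη, smul_eq_mul]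

lemma aux_integrable {L h : ℝ → ℝ} (a t η : ℝ) (hη : 0 < η)
    (hL : Continuous L) (hs : Function.support L ⊆ Set.Icc (-1:ℝ) 1)
    (hh : Continuous h) :
    Integrable (fun u : ℝ => a * L ((t - u)/η) * h u) := by
  apply Continuous.integrable_of_hasCompactSupport
  · exact ((continuous_const.mul (hL.comp ((continuous_const.sub continuous_id).div_const η))).mul hh)
  · apply HasCompactSupport.intro (isCompact_Icc (a := t - η) (b := t + η))
    intro u hu
    have hz : L ((t - u)/η) = 0 := by
      by_contra h0
      have hm := hs (Function.mem_support.mpr h0)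
      rw [Set.mem_Icc] at hm
      have h3 : t - u ≤ η := by
        have := (div_le_one hη).mp hm.2; linarith
      have h4 : -η ≤ t - u := by
        have := hm.1
        have : -1 * η ≤ (t - u) / η * η := by nlinarith
        rw [div_mul_cancel₀ _ hη.ne'] at this; linarith
      exact hu (Set.mem_Icc.mpr ⟨by linarith, by linarith⟩)
    simp [hz]

variable {E F' : Type*} [NormedAddCommGroup E] [NormedSpace ℝ E]
  [NormedAddCommGroup F'] [NormedSpace ℝ F']

lemma aux_fderiv_shift (g : E → F') (c x : E) :
    fderiv ℝ (fun y => g (y + c)) x = fderiv ℝ g (x + c) := by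
  by_cases h : DifferentiableAt ℝ g (x + c)
  · have h2 : HasFDerivAt (fun y : E => y + c) (ContinuousLinearMap.id ℝ E) x :=
      (hasFDerivAt_id x).add_const c
    have h3 := (h.hasFDerivAt.comp x h2)
    simpa [Function.comp_def] using h3.fderiv
  · rw [fderiv_zero_of_not_differentiableAt h, fderiv_zero_of_not_differentiableAt]
    intro hd
    apply h
    have h3 : DifferentiableAt ℝ (fun z : E => z - c) (x + c) :=
      differentiableAt_id.sub_const c
    have h4 : DifferentiableAt ℝ (fun y : E => g (y + c)) ((x + c) - c) := by
      simpa using hd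
    have h5 := DifferentiableAt.comp (x + c) h4 h3
    have h6 : ((fun y : E => g (y + c)) ∘ fun z : E => z - c) = g := by
      funext z; simp
    rwa [h6] at h5

lemma aux_iteratedFDeriv_shift (n : ℕ) (g : E → F') (c : E) :
    (fun x => iteratedFDeriv ℝ n (fun y => g (y + c)) x)
      = fun x => iteratedFDeriv ℝ n g (x + c) := by
  induction n with
  | zero =>
    funext x; ext m; simp [iteratedFDeriv_zero_apply]
  | succ n ih =>
    funext x
    rw [iteratedFDeriv_succ_eq_comp_left, iteratedFDeriv_succ_eq_comp_left]
    simp only [Function.comp_apply]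
    congr 1
    have : iteratedFDeriv ℝ n (fun y => g (y + c)) = fun x => iteratedFDeriv ℝ n g (x + c) := ih
    rw [this]
    exact aux_fderiv_shift (iteratedFDeriv ℝ n g) c x

lemma aux_bridge (F : ℝ × ℝ → ℝ) (hF : ContDiff ℝ (⊤ : ℕ∞) F) (k : ℕ) (t s : ℝ) :
    iteratedDeriv k (fun u => F (u, s)) t
      = iteratedFDeriv ℝ k F (t, s) (fun _ => ((1:ℝ), (0:ℝ))) := by
  have hc : (fun u : ℝ => F (u, s))
      = (fun z : ℝ × ℝ => F (z + ((0:ℝ), s))) ∘ (ContinuousLinearMap.inl ℝ ℝ ℝ) := by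
    funext u
    simp [Prod.ext_iff]
  have hsm : ContDiff ℝ (⊤ : ℕ∞) (fun z : ℝ × ℝ => F (z + ((0:ℝ), s))) :=
    hF.comp (contDiff_id.add contDiff_const)
  rw [iteratedDeriv_eq_iteratedFDeriv, hc,
    ContinuousLinearMap.iteratedFDeriv_comp_right _ hsm t ((by exact_mod_cast le_top))]
  rw [ContinuousMultilinearMap.compContinuousLinearMap_apply]
  have hsh := congrFun (aux_iteratedFDeriv_shift k F ((0:ℝ), s)) ((t:ℝ), (0:ℝ))
  simp only [ContinuousLinearMap.inl_apply] at *
  rw [hsh]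
  norm_num

lemma aux_taylor : ∀ (p : ℕ) (φ : ℝ → ℝ), ContDiff ℝ p φ →
    ∀ (M x₀ : ℝ), (∀ x, |iteratedDeriv p φ x| ≤ M) →
    ∀ x, |φ x - ∑ k ∈ Finset.range p, iteratedDeriv k φ x₀ * (x - x₀)^k / (k.factorial : ℝ)|
      ≤ M * |x - x₀|^p := by
  intro p
  induction p with
  | zero =>
    intro φ hφ M x₀ hM x
    simpa [iteratedDeriv_zero] using hM x
  | succ p ih =>
    intro φ hφ M x₀ hM x
    have hM0 : 0 ≤ M := le_trans (abs_nonneg _) (hM x₀)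
    have hφ' : ContDiff ℝ ((p : WithTop ℕ∞) + 1) φ := by exact_mod_cast hφ
    have hφd : Differentiable ℝ φ := hφ'.one_of_succ.differentiable one_ne_zero
    have hg : ContDiff ℝ p (deriv φ) := (contDiff_succ_iff_deriv.mp hφ').2.2
    have hgM : ∀ y, |iteratedDeriv p (deriv φ) y| ≤ M := by
      intro y; rw [← iteratedDeriv_succ']; exact hM y
    -- derivative of the Taylor polynomial
    set c : ℕ → ℝ := fun k => iteratedDeriv k φ x₀ with hc
    have hT : ∀ w : ℝ, HasDerivAt (fun w => ∑ k ∈ Finset.range (p+1),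
        c k * (w - x₀)^k / (k.factorial : ℝ))
        (∑ k ∈ Finset.range p, iteratedDeriv k (deriv φ) x₀ * (w - x₀)^k / (k.factorial : ℝ)) w := by
      intro w
      have h1 : HasDerivAt (fun w : ℝ => ∑ k ∈ Finset.range (p+1),
          c k * (w - x₀)^k / (k.factorial : ℝ))
          (∑ k ∈ Finset.range (p+1), c k * ((k : ℝ) * (w - x₀)^(k-1)) / (k.factorial : ℝ)) w := by
        apply HasDerivAt.fun_sum
        intro k _
        have h2 : HasDerivAt (fun w : ℝ => (w - x₀)^k) ((k:ℝ) * (w - x₀)^(k-1)) w := by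
          simpa using (((hasDerivAt_id w).sub_const x₀).fun_pow k)
        exact (h2.const_mul (c k)).div_const _
      convert h1 using 1
      rw [Finset.sum_range_succ' (fun k => c k * ((k:ℝ) * (w - x₀)^(k-1)) / (k.factorial : ℝ)) p]
      simp only [Nat.cast_zero, zero_mul, mul_zero, zero_div, add_zero]
      apply Finset.sum_congr rfl
      intro j _
      have hj : c (j+1) = iteratedDeriv j (deriv φ) x₀ := by
        rw [hc]; exact congrFun iteratedDeriv_succ' x₀
      rw [hj, Nat.factorial_succ]
      have h3 : ((j.factorial : ℝ)) ≠ 0 := Nat.cast_ne_zero.mpr j.factorial_ne_zero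
      have h4 : ((j:ℝ) + 1) ≠ 0 := by positivity
      push_cast
      field_simp
    -- apply mean value inequality to E := φ - T on uIcc x₀ x
    set T : ℝ → ℝ := fun w => ∑ k ∈ Finset.range (p+1), c k * (w - x₀)^k / (k.factorial : ℝ)
      with hTdef
    have hE : ∀ w ∈ Set.uIcc x₀ x, HasDerivWithinAt (fun w => φ w - T w)
        (deriv φ w - ∑ k ∈ Finset.range p, iteratedDeriv k (deriv φ) x₀ * (w - x₀)^k / (k.factorial : ℝ))
        (Set.uIcc x₀ x) w := by
      intro w _
      exact (((hφd w).hasDerivAt).sub (hT w)).hasDerivWithinAt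
    have habs : ∀ w ∈ Set.uIcc x₀ x, |w - x₀| ≤ |x - x₀| := by
      intro w hw
      rcases Set.mem_uIcc.mp hw with ⟨h1, h2⟩ | ⟨h1, h2⟩ <;>
        · rw [abs_le]
          constructor <;> [skip; skip] <;>
          · have := le_abs_self (x - x₀); have := neg_abs_le (x - x₀); linarith
    have hbound : ∀ w ∈ Set.uIcc x₀ x,
        ‖deriv φ w - ∑ k ∈ Finset.range p, iteratedDeriv k (deriv φ) x₀ * (w - x₀)^k / (k.factorial : ℝ)‖
        ≤ M * |x - x₀|^p := by
      intro w hw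
      rw [Real.norm_eq_abs]
      calc |deriv φ w - ∑ k ∈ Finset.range p, iteratedDeriv k (deriv φ) x₀ * (w - x₀)^k / (k.factorial : ℝ)|
          ≤ M * |w - x₀|^p := ih (deriv φ) hg M x₀ hgM w
        _ ≤ M * |x - x₀|^p := by
            apply mul_le_mul_of_nonneg_left _ hM0
            exact pow_le_pow_left₀ (abs_nonneg _) (habs w hw) p
    have hmvt := Convex.norm_image_sub_le_of_norm_hasDerivWithin_le hE hbound
      (convex_uIcc x₀ x) (Set.left_mem_uIcc) (Set.right_mem_uIcc)
    have hTx₀ : T x₀ = φ x₀ := by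
      show (∑ k ∈ Finset.range (p+1), c k * (x₀ - x₀)^k / (k.factorial : ℝ)) = φ x₀
      rw [Finset.sum_eq_single_of_mem 0 (Finset.mem_range.mpr (Nat.succ_pos p))]
      · simp [hc, iteratedDeriv_zero]
      · intro b _ hb
        simp [zero_pow hb]
    have : φ x₀ - T x₀ = 0 := by rw [hTx₀]; ring
    rw [Real.norm_eq_abs, Real.norm_eq_abs, this, sub_zero] at hmvt
    calc |φ x - T x| ≤ M * |x - x₀|^p * |x - x₀| := hmvt
      _ = M * |x - x₀|^(p+1) := by ring

lemma aux_osc : ∀ (m : ℕ) (L : ℝ → ℝ), ContDiff ℝ m L →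
    Function.support L ⊆ Set.Icc (-1:ℝ) 1 →
    ∀ (G : ℝ → ℝ) (B : ℝ), Continuous G → (∀ s, G (s+1) = G s) →
    (∫ s in (0:ℝ)..1, G s) = 0 → (∀ s, |G s| ≤ B) →
    ∀ (ε η t : ℝ), 0 < ε → ε ≤ η → η ≤ 1 →
    |∫ u : ℝ, η⁻¹ * L ((t - u)/η) * G (u / ε)|
      ≤ (∫ v : ℝ, |iteratedDeriv m L v|) * (2^m * B) * (ε/η)^m := by
  intro m
  induction m with
  | zero =>
    intro L hL hsupp G B hG hGper hGmean hGB ε η t hε hεη hη1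
    have hη : 0 < η := hε.trans_le hεη
    have hB0 : 0 ≤ B := (abs_nonneg _).trans (hGB 0)
    have hint1 : Integrable (fun u : ℝ => η⁻¹ * L ((t - u)/η) * G (u / ε)) :=
      aux_integrable η⁻¹ t η hη hL.continuous hsupp (hG.comp (continuous_id.div_const ε))
    have hint2 : Integrable (fun u : ℝ => η⁻¹ * |L ((t - u)/η)| * B) :=
      aux_integrable η⁻¹ t η hη hL.continuous.abs
        (by
          intro x hx
          apply hsupp
          simp only [Function.mem_support] at hx ⊢
          intro h0
          exact hx (by rw [h0, abs_zero])) continuous_const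
    have h1 : |∫ u : ℝ, η⁻¹ * L ((t - u)/η) * G (u / ε)|
        ≤ ∫ u : ℝ, |η⁻¹ * L ((t - u)/η) * G (u / ε)| := by
      have h1' := norm_integral_le_integral_norm (μ := volume)
        (fun u : ℝ => η⁻¹ * L ((t - u)/η) * G (u / ε))
      simp only [Real.norm_eq_abs] at h1'
      exact h1'
    have h2 : (∫ u : ℝ, |η⁻¹ * L ((t - u)/η) * G (u / ε)|)
        ≤ ∫ u : ℝ, η⁻¹ * |L ((t - u)/η)| * B := by
      apply integral_mono hint1.abs hint2
      intro u
      dsimp only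
      have : |η⁻¹ * L ((t - u)/η) * G (u / ε)| = η⁻¹ * |L ((t - u)/η)| * |G (u/ε)| := by
        rw [abs_mul, abs_mul, abs_of_nonneg (inv_nonneg.mpr hη.le)]
      rw [this]
      exact mul_le_mul_of_nonneg_left (hGB _) (by positivity)
    have h3 : (∫ u : ℝ, η⁻¹ * |L ((t - u)/η)| * B) = B * ∫ v : ℝ, |L v| := by
      have := aux_cv (fun v => η⁻¹ * |L v| * B) t η hη
      rw [this]
      have h4 : (fun v : ℝ => η⁻¹ * |L v| * B) = fun v => (η⁻¹ * B) * |L v| := by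
        funext v; ring
      rw [h4, integral_const_mul]
      field_simp
    have h5 : (∫ v : ℝ, |iteratedDeriv 0 L v|) * (2^0 * B) * (ε/η)^0
        = B * ∫ v : ℝ, |L v| := by
      simp [iteratedDeriv_zero]; ring
    rw [h5]
    exact h1.trans (h2.trans_eq h3)
  | succ m ih =>
    intro L hL hsupp G B hG hGper hGmean hGB ε η t hε hεη hη1
    have hη : 0 < η := hε.trans_le hεη
    have hB0 : 0 ≤ B := (abs_nonneg _).trans (hGB 0)
    have hLc : ContDiff ℝ ((m : WithTop ℕ∞) + 1) L := by exact_mod_cast hL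
    have hLd : Differentiable ℝ L := hLc.one_of_succ.differentiable one_ne_zero
    have hL' : ContDiff ℝ m (deriv L) := (contDiff_succ_iff_deriv.mp hLc).2.2
    have hsupp' := aux_support_deriv L hsupp
    -- primitive of G
    set P : ℝ → ℝ := fun s => ∫ σ in (0:ℝ)..s, G σ with hPdef
    have hPderiv : ∀ s, HasDerivAt P (G s) s := fun s =>
      intervalIntegral.integral_hasDerivAt_right (hG.intervalIntegrable _ _)
        (hG.stronglyMeasurableAtFilter _ _) hG.continuousAt
    have hPdiff : Differentiable ℝ P := fun s => (hPderiv s).differentiableAt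
    have hPcont : Continuous P := hPdiff.continuous
    have hPper : ∀ s, P (s + 1) = P s := by
      intro s
      have h1 := intervalIntegral.integral_add_adjacent_intervals (a := (0:ℝ)) (b := s)
        (c := s + 1) (hG.intervalIntegrable (μ := volume) _ _)
        (hG.intervalIntegrable (μ := volume) _ _)
      have h2 : (∫ σ in s..(s+1), G σ) = 0 := by
        have hper : Function.Periodic G 1 := hGper
        rw [hper.intervalIntegral_add_eq s 0]
        simpa using hGmean
      show (∫ σ in (0:ℝ)..(s+1), G σ) = ∫ σ in (0:ℝ)..s, G σ
      rw [← h1, h2, add_zero]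
    have hPper' : Function.Periodic P 1 := hPper
    have hPbound : ∀ s, |P s| ≤ B := by
      intro s
      have h1 : P s = P (Int.fract s) := by
        have h2 := hPper'.sub_int_mul_eq (x := s) ⌊s⌋
        rw [mul_one] at h2
        rw [← Int.self_sub_floor]
        exact h2.symm
      rw [h1]
      have h2 : ‖∫ σ in (0:ℝ)..(Int.fract s), G σ‖ ≤ B * |Int.fract s - 0| :=
        intervalIntegral.norm_integral_le_of_norm_le_const
          (fun x _ => by simpa [Real.norm_eq_abs] using hGB x)
      have h3 : |Int.fract s - 0| ≤ 1 := by
        rw [sub_zero, abs_of_nonneg (Int.fract_nonneg s)]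
        exact (Int.fract_lt_one s).le
      calc |P (Int.fract s)| ≤ B * |Int.fract s - 0| := by
              simpa [Real.norm_eq_abs] using h2
        _ ≤ B * 1 := mul_le_mul_of_nonneg_left h3 hB0
        _ = B := mul_one B
    set c : ℝ := ∫ s in (0:ℝ)..1, P s with hcdef
    have hcbound : |c| ≤ B := by
      have h2 : ‖∫ s in (0:ℝ)..1, P s‖ ≤ B * |1 - 0| :=
        intervalIntegral.norm_integral_le_of_norm_le_const
          (fun x _ => by simpa [Real.norm_eq_abs] using hPbound x)
      simpa [Real.norm_eq_abs] using h2
    set Pt : ℝ → ℝ := fun s => P s - c with hPtdef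
    have hPtcont : Continuous Pt := hPcont.sub continuous_const
    have hPtper : ∀ s, Pt (s+1) = Pt s := by intro s; simp only [hPtdef, hPper]
    have hPtmean : (∫ s in (0:ℝ)..1, Pt s) = 0 := by
      simp only [hPtdef]
      rw [intervalIntegral.integral_sub (hPcont.intervalIntegrable _ _)
        (intervalIntegrable_const)]
      simp [hcdef]
    have hPtB : ∀ s, |Pt s| ≤ 2 * B := by
      intro s
      simp only [hPtdef]
      calc |P s - c| ≤ |P s| + |c| := abs_sub _ _
        _ ≤ 2 * B := by have := hPbound s; have := hcbound; linarith
    have hPtderiv : ∀ s, HasDerivAt Pt (G s) s := fun s => (hPderiv s).sub_const c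
    -- integration by parts identity
    have key : (∫ u : ℝ, η⁻¹ * L ((t - u)/η) * G (u / ε))
        = (ε/η) * ∫ u : ℝ, η⁻¹ * (deriv L) ((t - u)/η) * Pt (u / ε) := by
      set S1 : ℝ → ℝ := fun u => (η⁻¹ * ((deriv L) ((t - u)/η) * -η⁻¹)) * (ε * Pt (u / ε))
        with hS1def
      set S2 : ℝ → ℝ := fun u => η⁻¹ * L ((t - u)/η) * G (u / ε) with hS2def
      have hWd : ∀ u, HasDerivAt (fun u => η⁻¹ * L ((t - u)/η) * (ε * Pt (u / ε)))
          (S1 u + S2 u) u := by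
        intro u
        have hinner : HasDerivAt (fun u : ℝ => (t - u)/η) (-η⁻¹) u := by
          have := ((hasDerivAt_const u t).sub (hasDerivAt_id u)).div_const η
          simpa [neg_div, div_eq_mul_inv] using this
        have h1 : HasDerivAt (fun u : ℝ => L ((t - u)/η)) ((deriv L) ((t-u)/η) * -η⁻¹) u :=
          HasDerivAt.comp u ((hLd ((t - u)/η)).hasDerivAt) hinner
        have hi2 : HasDerivAt (fun u : ℝ => u / ε) ε⁻¹ u := by
          simpa [div_eq_mul_inv] using (hasDerivAt_id u).div_const ε
        have h3 := HasDerivAt.comp u (hPtderiv (u/ε)) hi2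
        have h4 := h3.const_mul ε
        have h2 : HasDerivAt (fun u : ℝ => ε * Pt (u / ε)) (G (u/ε)) u := by
          refine h4.congr_deriv ?_
          have hε0 : ε ≠ 0 := hε.ne'
          field_simp
        exact ((h1.const_mul η⁻¹).mul h2)
      have hS1cont : Continuous S1 :=
        ((continuous_const.mul ((hL'.continuous.comp
          ((continuous_const.sub continuous_id).div_const η)).mul continuous_const)).mul
          (continuous_const.mul (hPtcont.comp (continuous_id.div_const ε))))
      have hS2cont : Continuous S2 :=
        ((continuous_const.mul (hLd.continuous.comp
          ((continuous_const.sub continuous_id).div_const η))).mul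
          (hG.comp (continuous_id.div_const ε)))
      have hLzero : ∀ x : ℝ, x ∉ Set.Icc (-1:ℝ) 1 → L x = 0 := by
        intro x hx; by_contra h0; exact hx (hsupp (Function.mem_support.mpr h0))
      have hLzero' : ∀ x : ℝ, x ∉ Set.Icc (-1:ℝ) 1 → (deriv L) x = 0 := by
        intro x hx; by_contra h0; exact hx (hsupp' (Function.mem_support.mpr h0))
      have houtIcc : ∀ u : ℝ, u ∉ Set.Ioc (t-2) (t+2) → ((t - u)/η) ∉ Set.Icc (-1:ℝ) 1 := by
        intro u hu hmem
        rw [Set.mem_Icc] at hmem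
        have h3 : t - u ≤ η := by
          have := (div_le_one hη).mp hmem.2; linarith
        have h4 : -η ≤ t - u := by
          have h5 : (-1 : ℝ) * η ≤ (t - u) / η * η :=
            mul_le_mul_of_nonneg_right hmem.1 hη.le
          rw [div_mul_cancel₀ _ hη.ne'] at h5; linarith
        exact hu (Set.mem_Ioc.mpr ⟨by linarith, by linarith⟩)
      have hglobal : (∫ u : ℝ, (S1 u + S2 u)) = ∫ u in (t-2)..(t+2), (S1 u + S2 u) := by
        rw [intervalIntegral.integral_of_le (by linarith : t - 2 ≤ t + 2)]
        symm
        apply setIntegral_eq_integral_of_forall_compl_eq_zero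
        intro u hu
        have h5 := houtIcc u hu
        simp [hS1def, hS2def, hLzero _ h5, hLzero' _ h5]
      have hFTC : (∫ u in (t-2)..(t+2), (S1 u + S2 u))
          = η⁻¹ * L ((t - (t+2))/η) * (ε * Pt ((t+2) / ε))
            - η⁻¹ * L ((t - (t-2))/η) * (ε * Pt ((t-2) / ε)) :=
        intervalIntegral.integral_eq_sub_of_hasDerivAt (fun u _ => hWd u)
          ((hS1cont.add hS2cont).intervalIntegrable _ _)
      have hend1 : L ((t - (t+2))/η) = 0 := by
        apply hLzero
        intro hmem
        rw [Set.mem_Icc] at hmem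
        have h6 : (t - (t+2))/η = -2/η := by ring_nf
        rw [h6] at hmem
        have h7 : -2/η ≤ -2 := by
          rw [div_le_iff₀ hη]  -- -2 ≤ -2 * η ?? careful sign
          nlinarith
        linarith [hmem.1]
      have hend2 : L ((t - (t-2))/η) = 0 := by
        apply hLzero
        intro hmem
        rw [Set.mem_Icc] at hmem
        have h6 : (t - (t-2))/η = 2/η := by ring_nf
        rw [h6] at hmem
        have h7 : (2:ℝ) ≤ 2/η := by
          rw [le_div_iff₀ hη]; nlinarith
        linarith [hmem.2]
      have hzero : (∫ u : ℝ, (S1 u + S2 u)) = 0 := by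
        rw [hglobal, hFTC, hend1, hend2]; ring
      have hintS1 : Integrable S1 := by
        have h8 : S1 = fun u => (η⁻¹ * -η⁻¹ * ε) * (deriv L) ((t - u)/η) * Pt (u / ε) := by
          funext u; simp only [hS1def]; ring
        rw [h8]
        exact aux_integrable _ t η hη hL'.continuous hsupp'
          (hPtcont.comp (continuous_id.div_const ε))
      have hintS2 : Integrable S2 := by
        simp only [hS2def]
        exact aux_integrable _ t η hη hLd.continuous hsupp
          (hG.comp (continuous_id.div_const ε))
      have hsplit := integral_add hintS1 hintS2
      have hS1val : (∫ u : ℝ, S1 u)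
          = -((ε/η) * ∫ u : ℝ, η⁻¹ * (deriv L) ((t - u)/η) * Pt (u / ε)) := by
        have h9 : S1 = fun u => (-(ε/η)) * (η⁻¹ * (deriv L) ((t - u)/η) * Pt (u / ε)) := by
          funext u; simp only [hS1def]; field_simp
        rw [h9, integral_const_mul]
        ring
      have h10 : (∫ u : ℝ, S1 u) + (∫ u : ℝ, S2 u) = 0 := by
        rw [← hsplit]; exact hzero
      have h11 : (∫ u : ℝ, S2 u)
          = (ε/η) * ∫ u : ℝ, η⁻¹ * (deriv L) ((t - u)/η) * Pt (u / ε) := by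
        rw [hS1val] at h10; linarith
      exact h11
    rw [key, abs_mul, abs_of_pos (div_pos hε hη)]
    have IH := ih (deriv L) hL' hsupp' Pt (2*B) hPtcont hPtper hPtmean hPtB ε η t hε hεη hη1
    calc (ε/η) * |∫ u : ℝ, η⁻¹ * (deriv L) ((t - u)/η) * Pt (u / ε)|
        ≤ (ε/η) * ((∫ v : ℝ, |iteratedDeriv m (deriv L) v|) * (2^m * (2*B)) * (ε/η)^m) :=
          mul_le_mul_of_nonneg_left IH (div_nonneg hε.le hη.le)
      _ = (∫ v : ℝ, |iteratedDeriv (m+1) L v|) * (2^(m+1) * B) * (ε/η)^(m+1) := by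
          rw [iteratedDeriv_succ']; ring

/-- Kernel averaging lemma (Lemma 1): for `K ∈ 𝕂^{p,q}` and `f^ε(t) = f(t, t/ε)`
with `f(t,s)` smooth, bounded with bounded derivatives, and 1-periodic in `s`,
`|(K_η ∗ f^ε)(t) − f̄(t)| ≤ C₁ η^p + C₂ (ε/η)^q` for `0 < ε ≤ η ≤ 1`, with
`C₁, C₂` independent of `ε` and `η`, where `f̄(t) = ∫₀¹ f(t,s) ds`. -/
theorem kernel_averaging_lemma
    (p q : ℕ) (hp : 1 ≤ p) (hq : 1 ≤ q)
    (K : ℝ → ℝ)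
    (hK_smooth : ContDiff ℝ q K)
    (hK_supp : Function.support K ⊆ Set.Icc (-1 : ℝ) 1)
    (hK_mass : (∫ t : ℝ, K t) = 1)
    (hK_mom : ∀ r : ℕ, 1 ≤ r → r ≤ p → (∫ t : ℝ, K t * t ^ r) = 0)
    (f : ℝ → ℝ → ℝ)
    (hf_smooth : ContDiff ℝ (⊤ : ℕ∞) fun z : ℝ × ℝ => f z.1 z.2)
    (hf_bdd : ∀ n : ℕ, ∃ B : ℝ, ∀ z : ℝ × ℝ,
      ‖iteratedFDeriv ℝ n (fun w : ℝ × ℝ => f w.1 w.2) z‖ ≤ B)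
    (hf_per : ∀ t s : ℝ, f t (s + 1) = f t s) :
    ∃ C₁ C₂ : ℝ, ∀ ε η : ℝ, 0 < ε → ε ≤ η → η ≤ 1 → ∀ t : ℝ,
      |(∫ u : ℝ, η⁻¹ * K ((t - u) / η) * f u (u / ε)) - ∫ s in (0:ℝ)..1, f t s|
        ≤ C₁ * η ^ p + C₂ * (ε / η) ^ q := by
  classical
  have hF : ContDiff ℝ (⊤ : ℕ∞) (fun z : ℝ × ℝ => f z.1 z.2) := hf_smooth
  choose B hB using hf_bdd
  have hB0 : ∀ n, 0 ≤ B n := fun n => le_trans (norm_nonneg _) (hB n (0, 0))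
  set g : ℕ → ℝ → ℝ → ℝ := fun k t s =>
    iteratedFDeriv ℝ k (fun z : ℝ × ℝ => f z.1 z.2) (t, s) (fun _ => ((1:ℝ), (0:ℝ))) with hgdef
  have hbridge : ∀ (k : ℕ) (t s : ℝ), iteratedDeriv k (fun u => f u s) t = g k t s :=
    fun k t s => aux_bridge (fun z : ℝ × ℝ => f z.1 z.2) hF k t s
  have hg_bound : ∀ (k : ℕ) (t s : ℝ), |g k t s| ≤ B k := by
    intro k t s
    have h1 := (iteratedFDeriv ℝ k (fun z : ℝ × ℝ => f z.1 z.2) (t, s)).le_opNorm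
      (fun _ => ((1:ℝ), (0:ℝ)))
    have h2 : (∏ _i : Fin k, ‖((1:ℝ), (0:ℝ))‖) = 1 := by
      simp [Prod.norm_def]
    rw [h2, mul_one] at h1
    calc |g k t s| = ‖g k t s‖ := (Real.norm_eq_abs _).symm
      _ ≤ ‖iteratedFDeriv ℝ k (fun z : ℝ × ℝ => f z.1 z.2) (t, s)‖ := h1
      _ ≤ B k := hB k (t, s)
  have hg_cont : ∀ k : ℕ, Continuous (fun z : ℝ × ℝ => g k z.1 z.2) := by
    intro k
    have h1 : Continuous (iteratedFDeriv ℝ k (fun z : ℝ × ℝ => f z.1 z.2)) :=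
      hF.continuous_iteratedFDeriv (by exact_mod_cast le_top)
    have h2 := (ContinuousMultilinearMap.apply ℝ (fun _ : Fin k => ℝ × ℝ) ℝ
      (fun _ => ((1:ℝ), (0:ℝ)))).continuous.comp h1
    have h3 : (fun z : ℝ × ℝ => g k z.1 z.2)
        = fun z : ℝ × ℝ => iteratedFDeriv ℝ k (fun z : ℝ × ℝ => f z.1 z.2) z
          (fun _ => ((1:ℝ), (0:ℝ))) := by
      funext z
      simp only [hgdef]
    rw [h3]
    exact h2
  have hg_per : ∀ (k : ℕ) (t s : ℝ), g k t (s + 1) = g k t s := by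
    intro k t s
    rw [← hbridge k t (s+1), ← hbridge k t s]
    congr 1
    funext u
    exact hf_per u s
  set L : ℕ → ℝ → ℝ := fun k w => K w * (-w)^k with hLdef
  have hLsm : ∀ k, ContDiff ℝ q (L k) := fun k => hK_smooth.mul ((contDiff_id.neg).pow k)
  have hLsupp : ∀ k, Function.support (L k) ⊆ Set.Icc (-1:ℝ) 1 := fun k =>
    subset_trans (Function.support_mul_subset_left _ _) hK_supp
  set D : ℕ → ℝ := fun k => (∫ v : ℝ, |iteratedDeriv q (L k) v|) * (2^q * (2 * B k)) with hDdef
  have hD0 : ∀ k, 0 ≤ D k := by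
    intro k
    apply mul_nonneg
    · exact integral_nonneg (fun v => abs_nonneg _)
    · have := hB0 k; positivity
  refine ⟨B p * ∫ v : ℝ, |K v|, ∑ k ∈ Finset.range p, (1 / (k.factorial : ℝ)) * D k, ?_⟩
  intro ε η hε hεη hη1 t
  have hη : 0 < η := hε.trans_le hεη
  have hcont_f : Continuous (fun u : ℝ => f u (u / ε)) :=
    hF.continuous.comp (continuous_id.prodMk (continuous_id.div_const ε))
  have hcont_g : ∀ k, Continuous (fun s : ℝ => g k t s) := by
    intro k
    have := (hg_cont k).comp ((continuous_const (y := t)).prodMk continuous_id)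
    exact this
  set M : ℕ → ℝ := fun k => ∫ s in (0:ℝ)..1, g k t s with hMdef
  have hMb : ∀ k, |M k| ≤ B k := by
    intro k
    have h2 : ‖∫ s in (0:ℝ)..1, g k t s‖ ≤ B k * |1 - 0| :=
      intervalIntegral.norm_integral_le_of_norm_le_const
        (fun x _ => by simpa [Real.norm_eq_abs] using hg_bound k t x)
    simpa [Real.norm_eq_abs] using h2
  set R : ℝ → ℝ := fun u => f u (u/ε)
    - ∑ k ∈ Finset.range p, g k t (u/ε) * (u - t)^k / (k.factorial : ℝ) with hRdef
  have hRcont : Continuous R := by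
    apply hcont_f.sub
    apply continuous_finset_sum
    intro k _
    exact (((hcont_g k).comp (continuous_id.div_const ε)).mul
      ((continuous_id.sub continuous_const).pow k)).div_const _
  have hRbound : ∀ u : ℝ, |R u| ≤ B p * |u - t|^p := by
    intro u
    have hφ : ContDiff ℝ p (fun w : ℝ => f w (u/ε)) :=
      (hF.comp ((contDiff_id (E := ℝ)).prodMk contDiff_const)).of_le (by exact_mod_cast le_top)
    have hMbd : ∀ x, |iteratedDeriv p (fun w : ℝ => f w (u/ε)) x| ≤ B p := by
      intro x; rw [hbridge p x (u/ε)]; exact hg_bound p x (u/ε)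
    have htay := aux_taylor p (fun w : ℝ => f w (u/ε)) hφ (B p) t hMbd u
    have heq : R u = (fun w : ℝ => f w (u/ε)) u - ∑ k ∈ Finset.range p,
        iteratedDeriv k (fun w : ℝ => f w (u/ε)) t * (u - t)^k / (k.factorial : ℝ) := by
      simp only [hRdef]
      congr 1
      apply Finset.sum_congr rfl
      intro k _
      rw [hbridge k t (u/ε)]
    rw [heq]
    exact htay
  -- integrability
  have hintR : Integrable (fun u : ℝ => η⁻¹ * K ((t-u)/η) * R u) :=
    aux_integrable _ t η hη hK_smooth.continuous hK_supp hRcont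
  have hintT : ∀ k : ℕ, Integrable (fun u : ℝ =>
      η⁻¹ * K ((t-u)/η) * (g k t (u/ε) * (u - t)^k / (k.factorial : ℝ))) := by
    intro k
    exact aux_integrable _ t η hη hK_smooth.continuous hK_supp
      ((((hcont_g k).comp (continuous_id.div_const ε)).mul
        ((continuous_id.sub continuous_const).pow k)).div_const _)
  have hintO : ∀ k : ℕ, Integrable (fun u : ℝ =>
      η⁻¹ * (L k) ((t-u)/η) * (g k t (u/ε) - M k)) := by
    intro k
    exact aux_integrable _ t η hη (hLsm k).continuous (hLsupp k)
      (((hcont_g k).comp (continuous_id.div_const ε)).sub continuous_const)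
  have hintMom : ∀ k : ℕ, Integrable (fun u : ℝ => η⁻¹ * K ((t-u)/η) * (u - t)^k) := by
    intro k
    exact aux_integrable _ t η hη hK_smooth.continuous hK_supp
      ((continuous_id.sub continuous_const).pow k)
  -- step 1
  have hstep1 : (∫ u : ℝ, η⁻¹ * K ((t - u) / η) * f u (u / ε))
      = (∫ u : ℝ, η⁻¹ * K ((t-u)/η) * R u)
        + ∑ k ∈ Finset.range p, ∫ u : ℝ,
            η⁻¹ * K ((t-u)/η) * (g k t (u/ε) * (u - t)^k / (k.factorial : ℝ)) := by
    have hpt : (fun u : ℝ => η⁻¹ * K ((t - u) / η) * f u (u / ε))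
        = fun u : ℝ => η⁻¹ * K ((t-u)/η) * R u + ∑ k ∈ Finset.range p,
            η⁻¹ * K ((t-u)/η) * (g k t (u/ε) * (u - t)^k / (k.factorial : ℝ)) := by
      funext u
      rw [← Finset.mul_sum, ← mul_add]
      congr 1
      simp only [hRdef]
      ring
    rw [hpt, integral_add hintR (integrable_finset_sum _ (fun k _ => hintT k)),
      integral_finset_sum _ (fun k _ => hintT k)]
  have hkey : ∀ u : ℝ, η * ((t - u)/η) = t - u := by
    intro u; field_simp
  have hmom : ∀ k : ℕ, (∫ u : ℝ, η⁻¹ * K ((t-u)/η) * (u - t)^k)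
      = (-η)^k * ∫ v : ℝ, K v * v^k := by
    intro k
    have h1 : (fun u : ℝ => η⁻¹ * K ((t-u)/η) * (u - t)^k)
        = fun u : ℝ => (fun v : ℝ => η⁻¹ * K v * (-(η * v))^k) ((t - u)/η) := by
      funext u
      simp only
      rw [hkey u, neg_sub]
    rw [h1, aux_cv (fun v : ℝ => η⁻¹ * K v * (-(η * v)) ^ k) t η hη]
    have h2 : (fun v : ℝ => η⁻¹ * K v * (-(η * v))^k)
        = fun v : ℝ => (η⁻¹ * (-η)^k) * (K v * v^k) := by
      funext v
      rw [← neg_mul, mul_pow]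
      ring
    rw [h2, integral_const_mul]
    field_simp
  have hTk : ∀ k ∈ Finset.range p,
      (∫ u : ℝ, η⁻¹ * K ((t-u)/η) * (g k t (u/ε) * (u - t)^k / (k.factorial : ℝ)))
      = (η^k / (k.factorial : ℝ)) * (∫ u : ℝ, η⁻¹ * (L k) ((t-u)/η) * (g k t (u/ε) - M k))
        + (M k / (k.factorial : ℝ)) * ((-η)^k * ∫ v : ℝ, K v * v^k) := by
    intro k _
    have h3 : ∀ u : ℝ, (u - t)^k = η^k * (-((t-u)/η))^k := by
      intro u
      rw [← mul_pow, mul_neg, hkey u, neg_sub]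
    have hpt : (fun u : ℝ => η⁻¹ * K ((t-u)/η) * (g k t (u/ε) * (u - t)^k / (k.factorial : ℝ)))
        = fun u : ℝ => (η^k / (k.factorial : ℝ)) * (η⁻¹ * (L k) ((t-u)/η) * (g k t (u/ε) - M k))
          + (M k / (k.factorial : ℝ)) * (η⁻¹ * K ((t-u)/η) * (u - t)^k) := by
      funext u
      simp only [hLdef]
      rw [h3 u]
      ring
    rw [hpt, integral_add ((hintO k).const_mul _) ((hintMom k).const_mul _),
      integral_const_mul, integral_const_mul, hmom k]
  have hsum2 : (∑ k ∈ Finset.range p,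
      (M k / (k.factorial : ℝ)) * ((-η)^k * ∫ v : ℝ, K v * v^k)) = M 0 := by
    rw [Finset.sum_eq_single_of_mem 0 (Finset.mem_range.mpr hp)]
    · simp [hK_mass]
    · intro b hb hb0
      rw [hK_mom b (Nat.one_le_iff_ne_zero.mpr hb0) (le_of_lt (Finset.mem_range.mp hb))]
      ring
  have hM0 : M 0 = ∫ s in (0:ℝ)..1, f t s := by
    have hgf : ∀ s : ℝ, g 0 t s = f t s := by
      intro s
      rw [← hbridge 0 t s, iteratedDeriv_zero]
    simp only [hMdef]
    exact intervalIntegral.integral_congr (fun s _ => hgf s)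
  have hOsc : ∀ k ∈ Finset.range p,
      |∫ u : ℝ, η⁻¹ * (L k) ((t-u)/η) * (g k t (u/ε) - M k)| ≤ D k * (ε/η)^q := by
    intro k _
    have hGc : Continuous (fun s : ℝ => g k t s - M k) := (hcont_g k).sub continuous_const
    have hGper : ∀ s : ℝ, g k t (s+1) - M k = g k t s - M k := fun s => by rw [hg_per k t s]
    have hGmean : (∫ s in (0:ℝ)..1, (g k t s - M k)) = 0 := by
      rw [intervalIntegral.integral_sub ((hcont_g k).intervalIntegrable _ _)
        intervalIntegrable_const]
      simp [hMdef]
    have hGB : ∀ s : ℝ, |g k t s - M k| ≤ 2 * B k := by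
      intro s
      calc |g k t s - M k| ≤ |g k t s| + |M k| := abs_sub _ _
        _ ≤ 2 * B k := by have := hg_bound k t s; have := hMb k; linarith
    have h5 := aux_osc q (L k) (hLsm k) (hLsupp k) (fun s => g k t s - M k) (2 * B k)
      hGc hGper hGmean hGB ε η t hε hεη hη1
    calc |∫ u : ℝ, η⁻¹ * (L k) ((t-u)/η) * (g k t (u/ε) - M k)|
        ≤ (∫ v : ℝ, |iteratedDeriv q (L k) v|) * (2^q * (2 * B k)) * (ε/η)^q := h5
      _ = D k * (ε/η)^q := by rw [hDdef]
  have hRint : |∫ u : ℝ, η⁻¹ * K ((t-u)/η) * R u| ≤ (B p * ∫ v : ℝ, |K v|) * η^p := by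
    have h1 := norm_integral_le_integral_norm (μ := volume)
      (fun u : ℝ => η⁻¹ * K ((t-u)/η) * R u)
    simp only [Real.norm_eq_abs] at h1
    have hint2 : Integrable (fun u : ℝ => η⁻¹ * |K ((t-u)/η)| * (B p * η^p)) :=
      aux_integrable _ t η hη hK_smooth.continuous.abs
        (by
          intro x hx
          apply hK_supp
          simp only [Function.mem_support] at hx ⊢
          intro h0
          exact hx (by rw [h0, abs_zero])) continuous_const
    have h2 : (∫ u : ℝ, |η⁻¹ * K ((t-u)/η) * R u|)
        ≤ ∫ u : ℝ, η⁻¹ * |K ((t-u)/η)| * (B p * η^p) := by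
      apply integral_mono hintR.abs hint2
      intro u
      dsimp only
      rw [abs_mul, abs_mul, abs_of_nonneg (inv_nonneg.mpr hη.le)]
      by_cases hKz : K ((t-u)/η) = 0
      · rw [hKz]
        simp only [abs_zero, mul_zero, zero_mul]
        have := hB0 p
        positivity
      · have hmem := hK_supp (Function.mem_support.mpr hKz)
        rw [Set.mem_Icc] at hmem
        have h3 : t - u ≤ η := by
          have := (div_le_one hη).mp hmem.2; linarith
        have h4 : -η ≤ t - u := by
          have h5 : (-1 : ℝ) * η ≤ (t - u) / η * η :=
            mul_le_mul_of_nonneg_right hmem.1 hη.le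
          rw [div_mul_cancel₀ _ hη.ne'] at h5; linarith
        have h5 : |R u| ≤ B p * η^p := by
          calc |R u| ≤ B p * |u - t|^p := hRbound u
            _ ≤ B p * η^p := by
                apply mul_le_mul_of_nonneg_left _ (hB0 p)
                apply pow_le_pow_left₀ (abs_nonneg _)
                rw [abs_le]; constructor <;> linarith
        exact mul_le_mul_of_nonneg_left h5 (by positivity)
    have h3 : (∫ u : ℝ, η⁻¹ * |K ((t-u)/η)| * (B p * η^p))
        = (B p * ∫ v : ℝ, |K v|) * η^p := by
      have h4 : (fun u : ℝ => η⁻¹ * |K ((t-u)/η)| * (B p * η^p))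
          = fun u : ℝ => (fun v : ℝ => η⁻¹ * |K v| * (B p * η^p)) ((t-u)/η) := rfl
      rw [h4, aux_cv (fun v : ℝ => η⁻¹ * |K v| * (B p * η^p)) t η hη]
      have h5 : (fun v : ℝ => η⁻¹ * |K v| * (B p * η^p))
          = fun v : ℝ => (η⁻¹ * (B p * η^p)) * |K v| := by
        funext v; ring
      rw [h5, integral_const_mul]
      field_simp
    exact h1.trans (h2.trans_eq h3)
  have hfinal : (∫ u : ℝ, η⁻¹ * K ((t - u) / η) * f u (u / ε)) - (∫ s in (0:ℝ)..1, f t s)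
      = (∫ u : ℝ, η⁻¹ * K ((t-u)/η) * R u)
        + ∑ k ∈ Finset.range p, (η^k / (k.factorial : ℝ))
          * (∫ u : ℝ, η⁻¹ * (L k) ((t-u)/η) * (g k t (u/ε) - M k)) := by
    rw [hstep1, Finset.sum_congr rfl hTk, Finset.sum_add_distrib, hsum2, hM0]
    ring
  rw [hfinal]
  have hterm : ∀ k ∈ Finset.range p,
      |(η^k / (k.factorial : ℝ)) * (∫ u : ℝ, η⁻¹ * (L k) ((t-u)/η) * (g k t (u/ε) - M k))|
        ≤ (1 / (k.factorial : ℝ)) * D k * (ε/η)^q := by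
    intro k hk
    rw [abs_mul]
    have h6 : |η^k / (k.factorial : ℝ)| = η^k / (k.factorial : ℝ) := by
      apply abs_of_nonneg; positivity
    rw [h6]
    have h8 := hOsc k hk
    have hηk : η^k ≤ 1 := pow_le_one₀ hη.le hη1
    have hfac : (0:ℝ) < (k.factorial : ℝ) := by positivity
    calc (η^k / (k.factorial : ℝ)) * |∫ u : ℝ, η⁻¹ * (L k) ((t-u)/η) * (g k t (u/ε) - M k)|
        ≤ (η^k / (k.factorial : ℝ)) * (D k * (ε/η)^q) :=
          mul_le_mul_of_nonneg_left h8 (by positivity)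
      _ ≤ (1 / (k.factorial : ℝ)) * (D k * (ε/η)^q) := by
          apply mul_le_mul_of_nonneg_right _ (mul_nonneg (hD0 k) (by positivity))
          rw [div_eq_mul_inv, div_eq_mul_inv, one_mul]
          exact mul_le_of_le_one_left (by positivity) hηk
      _ = (1 / (k.factorial : ℝ)) * D k * (ε/η)^q := by ring
  calc |(∫ u : ℝ, η⁻¹ * K ((t-u)/η) * R u)
        + ∑ k ∈ Finset.range p, (η^k / (k.factorial : ℝ))
          * (∫ u : ℝ, η⁻¹ * (L k) ((t-u)/η) * (g k t (u/ε) - M k))|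
      ≤ |∫ u : ℝ, η⁻¹ * K ((t-u)/η) * R u|
        + ∑ k ∈ Finset.range p, |(η^k / (k.factorial : ℝ))
          * (∫ u : ℝ, η⁻¹ * (L k) ((t-u)/η) * (g k t (u/ε) - M k))| :=
        (abs_add_le _ _).trans (add_le_add_right (Finset.abs_sum_le_sum_abs _ _) _)
    _ ≤ (B p * ∫ v : ℝ, |K v|) * η^p
        + ∑ k ∈ Finset.range p, (1 / (k.factorial : ℝ)) * D k * (ε/η)^q :=
        add_le_add hRint (Finset.sum_le_sum hterm)
    _ = (B p * ∫ v : ℝ, |K v|) * η^p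
        + (∑ k ∈ Finset.range p, (1 / (k.factorial : ℝ)) * D k) * (ε/η)^q := by
        rw [Finset.sum_mul]
end

section
/- Let p, q ≥ 1 be integers, K ∈ 𝕂^{p,q}, and let f : ℝ → ℝ be smooth and 1-periodic with mean f̄ = ∫₀¹ f(s) ds. Then there exists a constant C, independent of ε and η, such that for all ε, η > 0, |∫ K_η(t) f(t/ε) dt − f̄| ≤ C (ε/η)^q. -/
open MeasureTheory

lemma bound_of_periodic {h : ℝ → ℝ} (hc : Continuous h) (hper : Function.Periodic h 1) :
    ∃ M : ℝ, 0 ≤ M ∧ ∀ x, |h x| ≤ M := by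
  obtain ⟨C, hC⟩ := (isCompact_Icc (a := (0:ℝ)) (b := 1)).exists_bound_of_continuousOn
    hc.continuousOn
  refine ⟨max C 0, le_max_right _ _, fun x => ?_⟩
  have h1 : h x = h (Int.fract x) := by
    have := hper.sub_int_mul_eq (x := x) ⌊x⌋
    simp only [mul_one] at this
    rw [Int.fract]
    exact this.symm
  rw [h1]
  have := hC (Int.fract x) ⟨Int.fract_nonneg x, (Int.fract_lt_one x).le⟩
  rw [Real.norm_eq_abs] at this
  exact this.trans (le_max_left _ _)

lemma antideriv_lemma {h : ℝ → ℝ} (hc : Continuous h) (hper : Function.Periodic h 1)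
    (hmean : (∫ s in (0:ℝ)..1, h s) = 0) :
    Continuous (fun x => (∫ s in (0:ℝ)..x, h s) - ∫ u in (0:ℝ)..1, ∫ s in (0:ℝ)..u, h s) ∧
    Function.Periodic
      (fun x => (∫ s in (0:ℝ)..x, h s) - ∫ u in (0:ℝ)..1, ∫ s in (0:ℝ)..u, h s) 1 ∧
    (∫ x in (0:ℝ)..1,
      ((∫ s in (0:ℝ)..x, h s) - ∫ u in (0:ℝ)..1, ∫ s in (0:ℝ)..u, h s)) = 0 ∧
    ∀ x, HasDerivAt
      (fun x => (∫ s in (0:ℝ)..x, h s) - ∫ u in (0:ℝ)..1, ∫ s in (0:ℝ)..u, h s) (h x) x := by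
  set N : ℝ → ℝ := fun x => ∫ s in (0:ℝ)..x, h s with hN
  set c : ℝ := ∫ u in (0:ℝ)..1, N u with hcdef
  have hNder : ∀ x, HasDerivAt N (h x) x := fun x => (hc.integral_hasStrictDerivAt 0 x).hasDerivAt
  have hNcont : Continuous N :=
    continuous_iff_continuousAt.2 fun x => (hNder x).differentiableAt.continuousAt
  have hder : ∀ x, HasDerivAt (fun x => N x - c) (h x) x := fun x => (hNder x).sub_const c
  refine ⟨hNcont.sub continuous_const, ?_, ?_, hder⟩
  · intro x
    have hN1 : N (x + 1) = N x := by
      have h1 := intervalIntegral.integral_add_adjacent_intervals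
        (hc.intervalIntegrable (μ := volume) 0 x) (hc.intervalIntegrable (μ := volume) x (x + 1))
      have h2 := hper.intervalIntegral_add_eq x 0
      simp only [zero_add] at h2
      simp only [hN]
      rw [← h1, h2, hmean, add_zero]
    show N (x + 1) - c = N x - c
    rw [hN1]
  · rw [intervalIntegral.integral_sub (hNcont.intervalIntegrable _ _) intervalIntegrable_const,
      intervalIntegral.integral_const, ← hcdef]
    simp

noncomputable def antiDerivSeq (g : ℝ → ℝ) : ℕ → ℝ → ℝ
  | 0 => g
  | (k + 1) => fun x => (∫ s in (0:ℝ)..x, antiDerivSeq g k s) -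
      ∫ u in (0:ℝ)..1, ∫ s in (0:ℝ)..u, antiDerivSeq g k s

/-- Kernel averaging lemma for purely fast-scale periodic functions:
if `K ∈ 𝕂^{p,q}` and `f` is smooth and 1-periodic with mean `f̄`, then
`|∫ K_η(t) f(t/ε) dt − f̄| ≤ C (ε/η)^q` with `C` independent of `ε, η`. -/
theorem kernel_average_fast_scale
    (p q : ℕ) (hp : 1 ≤ p) (hq : 1 ≤ q)
    (K : ℝ → ℝ)
    (hK_smooth : ContDiff ℝ q K)
    (hK_supp : Function.support K ⊆ Set.Icc (-1 : ℝ) 1)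
    (hK_mass : (∫ t : ℝ, K t) = 1)
    (hK_mom : ∀ r : ℕ, 1 ≤ r → r ≤ p → (∫ t : ℝ, K t * t ^ r) = 0)
    (f : ℝ → ℝ)
    (hf_smooth : ContDiff ℝ (⊤ : ℕ∞) f)
    (hf_per : ∀ x : ℝ, f (x + 1) = f x) :
    ∃ C : ℝ, ∀ ε η : ℝ, 0 < ε → 0 < η →
      |(∫ t : ℝ, η⁻¹ * K (t / η) * f (t / ε)) - ∫ s in (0:ℝ)..1, f s|
        ≤ C * (ε / η) ^ q := by
  classical
  set fbar : ℝ := ∫ s in (0:ℝ)..1, f s with hfbar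
  set g : ℝ → ℝ := fun x => f x - fbar with hgdef
  have hfc : Continuous f := hf_smooth.continuous
  have hgc : Continuous g := hfc.sub continuous_const
  have hgper : Function.Periodic g 1 := fun x => by simp [hgdef, hf_per x]
  have hgmean : (∫ s in (0:ℝ)..1, g s) = 0 := by
    rw [hgdef]
    rw [intervalIntegral.integral_sub (hfc.intervalIntegrable (μ := volume) _ _)
      intervalIntegrable_const]
    simp [hfbar]
  set G : ℕ → ℝ → ℝ := antiDerivSeq g with hGdef
  have hGprop : ∀ k, Continuous (G k) ∧ Function.Periodic (G k) 1 ∧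
      (∫ s in (0:ℝ)..1, G k s) = 0 := by
    intro k; induction k with
    | zero => exact ⟨hgc, hgper, hgmean⟩
    | succ k ih =>
      obtain ⟨hc, hper, hmean⟩ := ih
      obtain ⟨h1, h2, h3, _⟩ := antideriv_lemma hc hper hmean
      exact ⟨h1, h2, h3⟩
  have hGder : ∀ k x, HasDerivAt (G (k + 1)) (G k x) x := fun k x =>
    (antideriv_lemma (hGprop k).1 (hGprop k).2.1 (hGprop k).2.2).2.2.2 x
  obtain ⟨M, hM0, hMb⟩ := bound_of_periodic (hGprop q).1 (hGprop q).2.1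
  have hKcs : ∀ k, HasCompactSupport (iteratedDeriv k K) := by
    intro k; induction k with
    | zero =>
      rw [iteratedDeriv_zero]
      exact HasCompactSupport.of_support_subset_isCompact isCompact_Icc hK_supp
    | succ k ih => rw [iteratedDeriv_succ]; exact ih.deriv
  have hKc : ∀ k, k ≤ q → Continuous (iteratedDeriv k K) := fun k hk =>
    hK_smooth.continuous_iteratedDeriv k (by exact_mod_cast hk)
  have hKd : ∀ k, k < q → ∀ t, HasDerivAt (iteratedDeriv k K) (iteratedDeriv (k + 1) K t) t := by
    intro k hk t
    have h1 := (hK_smooth.differentiable_iteratedDeriv k (by exact_mod_cast hk)) t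
    rw [iteratedDeriv_succ]
    exact h1.hasDerivAt
  set CK : ℝ := ∫ t : ℝ, |iteratedDeriv q K t| with hCKdef
  have hCK0 : 0 ≤ CK := integral_nonneg fun t => abs_nonneg _
  refine ⟨M * CK, ?_⟩
  intro ε η hε hη
  have hεne : ε ≠ 0 := hε.ne'
  have hηne : η ≠ 0 := hη.ne'
  -- compact support of scaled kernels
  have hucs : ∀ k, HasCompactSupport (fun t => iteratedDeriv k K (t / η)) := by
    intro k
    have hemb := (Homeomorph.mulRight₀ η⁻¹ (inv_ne_zero hηne)).isClosedEmbedding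
    have h2 := HasCompactSupport.comp_isClosedEmbedding (hKcs k) hemb
    simpa [Function.comp_def, div_eq_mul_inv] using h2
  have hucont : ∀ k, k ≤ q → Continuous (fun t => iteratedDeriv k K (t / η)) := fun k hk =>
    (hKc k hk).comp (continuous_id.div_const η)
  have hvcont : ∀ k, Continuous (fun t => G k (t / ε)) := fun k =>
    ((hGprop k).1).comp (continuous_id.div_const ε)
  set I : ℕ → ℝ := fun k => ∫ t : ℝ, iteratedDeriv k K (t / η) * G k (t / ε) with hIdef
  have hint : ∀ j k, j ≤ q →
      Integrable (fun t => iteratedDeriv j K (t / η) * G k (t / ε)) := fun j k hj =>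
    ((hucont j hj).mul (hvcont k)).integrable_of_hasCompactSupport (HasCompactSupport.mul_right (hucs j))
  have hstep : ∀ k, k < q → I k = -(ε / η) * I (k + 1) := by
    intro k hk
    have hu : ∀ t, HasDerivAt (fun t => iteratedDeriv k K (t / η))
        (iteratedDeriv (k + 1) K (t / η) * η⁻¹) t := by
      intro t
      have h1 : HasDerivAt (fun t : ℝ => t / η) η⁻¹ t := by
        simpa using (hasDerivAt_id t).div_const η
      exact (hKd k hk (t / η)).comp t h1
    have hv : ∀ t, HasDerivAt (fun t => G (k + 1) (t / ε)) (G k (t / ε) * ε⁻¹) t := by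
      intro t
      have h1 : HasDerivAt (fun t : ℝ => t / ε) ε⁻¹ t := by
        simpa using (hasDerivAt_id t).div_const ε
      exact (hGder k (t / ε)).comp t h1
    have huv' : Integrable (fun t => iteratedDeriv k K (t / η) * (G k (t / ε) * ε⁻¹)) := by
      have := (hint k k hk.le).mul_const ε⁻¹
      simpa [mul_assoc] using this
    have hu'v : Integrable
        (fun t => iteratedDeriv (k + 1) K (t / η) * η⁻¹ * G (k + 1) (t / ε)) := by
      have := (hint (k + 1) (k + 1) hk).mul_const η⁻¹
      refine this.congr ?_
      filter_upwards with t
      ring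
    have huv : Integrable
        (fun t => iteratedDeriv k K (t / η) * G (k + 1) (t / ε)) := hint k (k + 1) hk.le
    have ibp := MeasureTheory.integral_mul_deriv_eq_deriv_mul_of_integrable (fun x _ => hu x) (fun x _ => hv x) huv' hu'v huv
    have l1 : (∫ t : ℝ, iteratedDeriv k K (t / η) * (G k (t / ε) * ε⁻¹)) = I k * ε⁻¹ := by
      simp only [← mul_assoc]
      exact integral_mul_const _ _
    have r1 : (∫ t : ℝ, iteratedDeriv (k + 1) K (t / η) * η⁻¹ * G (k + 1) (t / ε))
        = I (k + 1) * η⁻¹ := by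
      have hcomm : ∀ t : ℝ, iteratedDeriv (k + 1) K (t / η) * η⁻¹ * G (k + 1) (t / ε)
          = iteratedDeriv (k + 1) K (t / η) * G (k + 1) (t / ε) * η⁻¹ := fun t => by ring
      simp only [hcomm]
      exact integral_mul_const _ _
    rw [l1, r1] at ibp
    have : I k = (I k * ε⁻¹) * ε := by field_simp
    rw [this, ibp, div_eq_mul_inv]
    ring
  have hiter : ∀ j, j ≤ q → I 0 = (-(ε / η)) ^ j * I j := by
    intro j hj; induction j with
    | zero => simp
    | succ j ih =>
      rw [ih (by omega), hstep j (by omega), pow_succ]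
      ring
  have habs : |I 0| = (ε / η) ^ q * |I q| := by
    rw [hiter q le_rfl, abs_mul, abs_pow, abs_neg, abs_div, abs_of_pos hε, abs_of_pos hη]
  -- bound |I q|
  have hintq := hint q q le_rfl
  have hintabs : Integrable (fun t => |iteratedDeriv q K (t / η)| * M) := by
    have hcont : Continuous (fun t => |iteratedDeriv q K (t / η)| * M) :=
      ((hucont q le_rfl).abs).mul continuous_const
    have hcs : HasCompactSupport (fun t => |iteratedDeriv q K (t / η)|) :=
      (hucs q).comp_left (g := fun y : ℝ => |y|) abs_zero
    exact hcont.integrable_of_hasCompactSupport (HasCompactSupport.mul_right hcs)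
  have hIqb : |I q| ≤ η * CK * M := by
    have step1 : |I q| ≤ ∫ t : ℝ, |iteratedDeriv q K (t / η) * G q (t / ε)| := by
      have := norm_integral_le_integral_norm (μ := volume)
        (f := fun t => iteratedDeriv q K (t / η) * G q (t / ε))
      simpa only [Real.norm_eq_abs, hIdef] using this
    have step2 : (∫ t : ℝ, |iteratedDeriv q K (t / η) * G q (t / ε)|)
        ≤ ∫ t : ℝ, |iteratedDeriv q K (t / η)| * M := by
      refine integral_mono hintq.abs hintabs fun t => ?_
      rw [abs_mul]
      exact mul_le_mul_of_nonneg_left (hMb _) (abs_nonneg _)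
    have step3 : (∫ t : ℝ, |iteratedDeriv q K (t / η)| * M)
        = (∫ t : ℝ, |iteratedDeriv q K (t / η)|) * M := integral_mul_const _ _
    have step4 : (∫ t : ℝ, |iteratedDeriv q K (t / η)|) = η * CK := by
      rw [MeasureTheory.Measure.integral_comp_div (fun y => |iteratedDeriv q K y|) η]
      rw [abs_of_pos hη, smul_eq_mul, hCKdef]
    calc |I q| ≤ ∫ t : ℝ, |iteratedDeriv q K (t / η) * G q (t / ε)| := step1
      _ ≤ ∫ t : ℝ, |iteratedDeriv q K (t / η)| * M := step2
      _ = η * CK * M := by rw [step3, step4]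
  -- identify the main quantity with η⁻¹ * I 0
  have hKmass' : (∫ t : ℝ, K (t / η)) = η := by
    rw [MeasureTheory.Measure.integral_comp_div K η, hK_mass, abs_of_pos hη, smul_eq_mul, mul_one]
  have hu0cs : HasCompactSupport (fun t => K (t / η)) := by
    have := hucs 0
    simpa [iteratedDeriv_zero] using this
  have hu0cont : Continuous (fun t => K (t / η)) := hK_smooth.continuous.comp
    (continuous_id.div_const η)
  have hintA : Integrable (fun t => η⁻¹ * K (t / η) * f (t / ε)) := by
    refine Continuous.integrable_of_hasCompactSupport ?_ ?_
    · exact (continuous_const.mul hu0cont).mul (hfc.comp (continuous_id.div_const ε))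
    · exact HasCompactSupport.mul_right (HasCompactSupport.mul_left hu0cs)
  have hintB : Integrable (fun t => η⁻¹ * K (t / η) * fbar) := by
    refine Continuous.integrable_of_hasCompactSupport ?_ ?_
    · exact (continuous_const.mul hu0cont).mul continuous_const
    · exact HasCompactSupport.mul_right (HasCompactSupport.mul_left hu0cs)
  have key : (∫ t : ℝ, η⁻¹ * K (t / η) * f (t / ε)) - fbar = η⁻¹ * I 0 := by
    have e1 : η⁻¹ * I 0 = ∫ t : ℝ, η⁻¹ * (K (t / η) * (f (t / ε) - fbar)) := by
      have hG0 : ∀ x, G 0 x = f x - fbar := fun x => rfl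
      rw [hIdef]
      simp only [iteratedDeriv_zero, hG0]
      rw [← integral_const_mul]
    have e2 : (∫ t : ℝ, η⁻¹ * (K (t / η) * (f (t / ε) - fbar)))
        = (∫ t : ℝ, η⁻¹ * K (t / η) * f (t / ε)) - ∫ t : ℝ, η⁻¹ * K (t / η) * fbar := by
      rw [← integral_sub hintA hintB]
      congr 1; funext t; ring
    have e3 : (∫ t : ℝ, η⁻¹ * K (t / η) * fbar) = fbar := by
      have h1 : ∀ t : ℝ, η⁻¹ * K (t / η) * fbar = η⁻¹ * (K (t / η) * fbar) :=
        fun t => by ring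
      simp only [h1]
      rw [integral_const_mul, integral_mul_const, hKmass']
      field_simp
    rw [e1, e2, e3]
  rw [key, abs_mul, abs_of_pos (inv_pos.2 hη), habs]
  calc η⁻¹ * ((ε / η) ^ q * |I q|) ≤ η⁻¹ * ((ε / η) ^ q * (η * CK * M)) := by
        gcongr
    _ = M * CK * (ε / η) ^ q := by field_simp
end

section
/- Let K ∈ 𝕂^{p,q} with q ≥ 1. Then there exists a constant C, independent of ε, τ and λ, such that for all ε, τ > 0 and all λ > 0, |∫ K_τ(t) cos(t√λ/ε) dt| ≤ C λ^{−q/2} (ε/τ)^q. -/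
/-!
Integrating by parts `q` times (here: the Fourier identity `𝓕 (f⁽ᵠ⁾) ξ = (2πiξ)^q 𝓕 f ξ`)
gives `|∫ K(s) cos(ωs) ds| ≤ ω^{-q} ∫ |K⁽ᵠ⁾|` for every `ω > 0`. The substitution `t = τs`
turns the averaged mode into this integral with `ω = τ√λ/ε`.
-/

open MeasureTheory Real FourierTransform

theorem HasCompactSupport.iteratedDeriv {𝕜 F : Type*} [NontriviallyNormedField 𝕜]
    [NormedAddCommGroup F] [NormedSpace 𝕜 F] {f : 𝕜 → F} (hf : HasCompactSupport f) (n : ℕ) :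
    HasCompactSupport (iteratedDeriv n f) := by
  induction n with
  | zero => simpa using hf
  | succ n ih => simpa [iteratedDeriv_succ] using ih.deriv

theorem abs_two_pi_mul_pow_mul_norm_fourier_le {E : Type*} [NormedAddCommGroup E]
    [NormedSpace ℂ E] {f : ℝ → E} {n : ℕ} (hf : ContDiff ℝ n f) (hc : HasCompactSupport f)
    (ξ : ℝ) : |2 * π * ξ| ^ n * ‖𝓕 f ξ‖ ≤ ∫ v, ‖iteratedDeriv n f v‖ := by
  have hint (k : ℕ) (hk : k ≤ (n : ℕ∞)) : Integrable (iteratedDeriv k f) :=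
    (hf.continuous_iteratedDeriv k (by exact_mod_cast hk)).integrable_of_hasCompactSupport
      (hc.iteratedDeriv k)
  calc |2 * π * ξ| ^ n * ‖𝓕 f ξ‖ = ‖𝓕 (iteratedDeriv n f) ξ‖ := by
        rw [Real.fourier_iteratedDeriv hf hint le_rfl, norm_smul, norm_pow]
        simp [abs_of_pos pi_pos]
    _ ≤ ∫ v, ‖iteratedDeriv n f v‖ := VectorFourier.norm_fourierIntegral_le_integral_norm _ _ _ _ _

theorem integral_mul_cos_eq_re_fourier {K : ℝ → ℝ} (hK : Integrable K) (ω : ℝ) :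
    ∫ s, K s * cos (s * ω) = (𝓕 (fun t ↦ (K t : ℂ)) (ω / (2 * π))).re := by
  have hint : Integrable (fun v : ℝ ↦ Complex.exp ((-2 * π * v * (ω / (2 * π)) : ℝ) * Complex.I)
      • (K v : ℂ)) := by
    refine (hK.ofReal.bdd_mul (c := 1) (by fun_prop) (.of_forall fun v ↦ ?_))
    exact (Complex.norm_exp_ofReal_mul_I _).le
  rw [Real.fourier_real_eq_integral_exp_smul, ← RCLike.re_to_complex, ← integral_re hint]
  congr 1 with v
  have hphase : -2 * π * v * (ω / (2 * π)) = -(v * ω) := by field_simp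
  rw [RCLike.re_to_complex, smul_eq_mul, hphase, Complex.re_mul_ofReal,
    Complex.exp_ofReal_mul_I_re, cos_neg, mul_comm]

theorem norm_iteratedDeriv_ofReal_comp {K : ℝ → ℝ} {n : ℕ} (hK : ContDiff ℝ n K) (x : ℝ) :
    ‖iteratedDeriv n (fun t ↦ (K t : ℂ)) x‖ = |iteratedDeriv n K x| := by
  rw [← norm_iteratedFDeriv_eq_norm_iteratedDeriv, ← Real.norm_eq_abs,
    ← norm_iteratedFDeriv_eq_norm_iteratedDeriv]
  exact Complex.ofRealLI.norm_iteratedFDeriv_comp_left hK.contDiffAt le_rfl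

theorem pow_abs_mul_abs_integral_mul_cos_le {K : ℝ → ℝ} {n : ℕ} (hK : ContDiff ℝ n K)
    (hc : HasCompactSupport K) (ω : ℝ) :
    |ω| ^ n * |∫ s, K s * cos (s * ω)| ≤ ∫ v, |iteratedDeriv n K v| := by
  set f : ℝ → ℂ := fun t ↦ (K t : ℂ)
  have hf : ContDiff ℝ n f := Complex.ofRealCLM.contDiff.comp hK
  have hfc : HasCompactSupport f := hc.comp_left Complex.ofReal_zero
  calc |ω| ^ n * |∫ s, K s * cos (s * ω)|
        ≤ |2 * π * (ω / (2 * π))| ^ n * ‖𝓕 f (ω / (2 * π))‖ := by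
        rw [integral_mul_cos_eq_re_fourier (hK.continuous.integrable_of_hasCompactSupport hc),
          mul_div_cancel₀ _ (by positivity)]
        gcongr
        exact Complex.abs_re_le_norm _
    _ ≤ ∫ v, ‖iteratedDeriv n f v‖ := abs_two_pi_mul_pow_mul_norm_fourier_le hf hfc _
    _ = ∫ v, |iteratedDeriv n K v| := by simp_rw [f, norm_iteratedDeriv_ofReal_comp hK]

theorem integral_inv_mul_comp_div_mul_cos (K : ℝ → ℝ) {τ : ℝ} (hτ : 0 < τ) (a : ℝ) :
    ∫ t, τ⁻¹ * K (t / τ) * cos (t * a) = ∫ s, K s * cos (s * (τ * a)) := by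
  have hrescale (t : ℝ) : τ⁻¹ * K (t / τ) * cos (t * a) =
      τ⁻¹ * (K (t / τ) * cos (t / τ * (τ * a))) := by
    rw [show t / τ * (τ * a) = t * a by field_simp, mul_assoc]
  simp_rw [hrescale]
  rw [integral_const_mul, Measure.integral_comp_div (fun s ↦ K s * cos (s * (τ * a))),
    abs_of_pos hτ, smul_eq_mul, inv_mul_cancel_left₀ hτ.ne']

theorem rpow_neg_half_mul_div_pow {lam : ℝ} (hlam : 0 < lam) (ε τ : ℝ) (n : ℕ) :
    lam ^ (-(n : ℝ) / 2) * (ε / τ) ^ n = ((τ * (√lam / ε)) ^ n)⁻¹ := by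
  rw [show -(n : ℝ) / 2 = -((1 / 2) * n) by ring, rpow_neg hlam.le, rpow_mul hlam.le,
    ← sqrt_eq_rpow, rpow_natCast, mul_pow, div_pow, div_pow, mul_inv, inv_div]
  ring

theorem kernel_average_oscillatory_mode_general
    (q : ℕ)
    (K : ℝ → ℝ)
    (hK_smooth : ContDiff ℝ q K)
    (hK_supp : Function.support K ⊆ Set.Icc (-1 : ℝ) 1) :
    ∃ C : ℝ, ∀ ε τ lam : ℝ, 0 < ε → 0 < τ → 0 < lam →
      |∫ t : ℝ, τ⁻¹ * K (t / τ) * Real.cos (t * Real.sqrt lam / ε)|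
        ≤ C * lam ^ (-(q : ℝ) / 2) * (ε / τ) ^ q := by
  refine ⟨∫ v, |iteratedDeriv q K v|, fun ε τ lam hε hτ hlam ↦ ?_⟩
  have hc : HasCompactSupport K := .of_support_subset_isCompact isCompact_Icc hK_supp
  have hω : 0 < τ * (√lam / ε) := by positivity
  have hdecay := pow_abs_mul_abs_integral_mul_cos_le hK_smooth hc (τ * (√lam / ε))
  simp_rw [mul_div_assoc]
  rw [integral_inv_mul_comp_div_mul_cos K hτ, mul_assoc, rpow_neg_half_mul_div_pow hlam,
    ← div_eq_mul_inv, le_div_iff₀ (by positivity), mul_comm]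
  rwa [abs_of_pos hω] at hdecay

/-- Decay of the time average of an oscillatory eigenmode: for `K ∈ 𝕂^{p,q}` with
`q ≥ 1`, `|∫ K_τ(t) cos(t√λ/ε) dt| ≤ C λ^{−q/2} (ε/τ)^q`, with `C` independent
of `ε`, `τ` and `λ`. -/
theorem kernel_average_oscillatory_mode
    (p q : ℕ) (hq : 1 ≤ q)
    (K : ℝ → ℝ)
    (hK_smooth : ContDiff ℝ q K)
    (hK_supp : Function.support K ⊆ Set.Icc (-1 : ℝ) 1)
    (hK_mass : (∫ t : ℝ, K t) = 1)
    (hK_mom : ∀ r : ℕ, 1 ≤ r → r ≤ p → (∫ t : ℝ, K t * t ^ r) = 0) :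
    ∃ C : ℝ, ∀ ε τ lam : ℝ, 0 < ε → 0 < τ → 0 < lam →
      |∫ t : ℝ, τ⁻¹ * K (t / τ) * Real.cos (t * Real.sqrt lam / ε)|
        ≤ C * lam ^ (-(q : ℝ) / 2) * (ε / τ) ^ q :=
  kernel_average_oscillatory_mode_general q K hK_smooth hK_supp
end
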